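/- For a polynomial f of degree d with integer coefficients, the greatest common divisor of the set {f(n) : n ∈ ℤ} equals gcd(f(0), f(1), ..., f(d)). -/

import Mathlib

open Polynomial

private lemma key_aux (e : ℤ) : ∀ d : ℕ, ∀ f : Polynomial ℤ, f.natDegree ≤ d →
    (∀ k : ℕ, k ≤ d → e ∣ f.eval (k : ℤ)) → ∀ n : ℤ, e ∣ f.eval n := by
  intro d
  induction d with
  | zero =>
    intro f hdeg hk n
    have hf : f = C (f.coeff 0) := f.eq_C_of_natDegree_le_zero hdeg
    have h0 := hk 0 le_rfl
    rw [hf] at h0 ⊢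
    simpa using h0
  | succ d ih =>
    intro f hdeg hk n
    set g : Polynomial ℤ := f.comp (X + 1) - f with hg
    have hgeval : ∀ m : ℤ, g.eval m = f.eval (m + 1) - f.eval m := by
      intro m; simp [hg, eval_comp]
    have hgdeg : g.natDegree ≤ d := by
      by_cases h0 : f.natDegree = 0
      · have hf : f = C (f.coeff 0) := f.eq_C_of_natDegree_le_zero (le_of_eq h0)
        have hz : g = 0 := by rw [hg, hf]; simp
        simp [hz]
      · have hfne : f ≠ 0 := fun h => h0 (by simp [h])
        have hf0 : f.comp (X + 1) ≠ 0 := by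
          intro h
          rw [comp_eq_zero_iff] at h
          rcases h with h | ⟨_, h⟩
          · exact hfne h
          · have h2 := congrArg natDegree h
            have h1 : ((X : Polynomial ℤ) + 1).natDegree = 1 := by
              simpa using natDegree_X_add_C (1 : ℤ)
            simp [h1] at h2
        have hX1 : (X + 1 : Polynomial ℤ).natDegree = 1 := by
          simpa using natDegree_X_add_C (1 : ℤ)
        have hdegc : (f.comp (X + 1)).degree = f.degree := by
          rw [degree_eq_natDegree hf0, degree_eq_natDegree (fun h => hf0 (by simp [h])),
            natDegree_comp, hX1, mul_one]
        have hlc : (f.comp (X + 1)).leadingCoeff = f.leadingCoeff := by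
          rw [leadingCoeff_comp (by rw [hX1]; exact one_ne_zero)]
          have : (X + 1 : Polynomial ℤ).leadingCoeff = 1 := by
            simpa using (monic_X_add_C (1 : ℤ)).leadingCoeff
          simp [this]
        have hlt : g.degree < f.degree := by
          have := degree_sub_lt hdegc hf0 hlc
          rwa [hdegc] at this
        by_cases hgz : g = 0
        · simp [hgz]
        · have hlt' : g.natDegree < f.natDegree := natDegree_lt_natDegree hgz hlt
          omega
    have hgk : ∀ k : ℕ, k ≤ d → e ∣ g.eval (k : ℤ) := by
      intro k hkd
      rw [hgeval]
      have h1 : e ∣ f.eval ((k + 1 : ℕ) : ℤ) := hk (k + 1) (by omega)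
      push_cast at h1
      exact dvd_sub h1 (hk k (by omega))
    have hgall : ∀ m : ℤ, e ∣ g.eval m := ih g hgdeg hgk
    induction n using Int.induction_on with
    | zero => exact hk 0 (by omega)
    | succ i hi =>
      have hgi := hgall (i : ℤ)
      rw [hgeval] at hgi
      have : e ∣ (f.eval ((i : ℤ) + 1) - f.eval (i : ℤ)) + f.eval (i : ℤ) := dvd_add hgi hi
      simpa using this
    | pred i hi =>
      have hgi := hgall (-(i : ℤ) - 1)
      rw [hgeval] at hgi
      have : e ∣ f.eval (-(i : ℤ)) - (f.eval (-(i : ℤ) - 1 + 1) - f.eval (-(i : ℤ) - 1)) :=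
        dvd_sub hi hgi
      simpa using this
  
theorem fixed_divisor_eq_gcd_truncated_image (f : Polynomial ℤ) (d : ℕ)
    (hd : f.natDegree = d) (e : ℤ) :
    (∀ n : ℤ, e ∣ f.eval n) ↔ (∀ k : ℕ, k ≤ d → e ∣ f.eval (k : ℤ)) := by
  constructor
  · intro h k _; exact h k
  · intro hk
    exact key_aux e d f (le_of_eq hd) hk
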